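/- arXiv:2506.13612 — 5 statements merged into one kernel-verified Lean document; each statement's English description precedes it below -/
import Mathlib

section
/- Let {Mᵢ}_{i=1}^{2n} be mutually orthogonal matrices (Mᵢ Mⱼᵀ = I if i = j, else 0), let x₁, …, x_n be vectors, and let R₁, …, R_n be vectors with Σᵢ Rᵢ = 0. Define χᵢ = xᵢ Mᵢ + Rᵢ M_{i+n} and dk = Σ_{i=1}^{2n} Mᵢ. Then (Σ_{i=1}^n χᵢ) · dkᵀ = Σ_{i=1}^n xᵢ. -/
open Matrix BigOperators

/-- VOMCA aggregated decoding. -/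
theorem vomca_aggregate_decode (n a b : ℕ)
    (M : (Fin n ⊕ Fin n) → Matrix (Fin a) (Fin b) ℝ)
    (hM : ∀ i j, M i * (M j)ᵀ = if i = j then 1 else 0)
    (x R : Fin n → Matrix (Fin 1) (Fin a) ℝ)
    (hR : ∑ i, R i = 0)
    (χ : Fin n → Matrix (Fin 1) (Fin b) ℝ)
    (hχ : ∀ i, χ i = x i * M (Sum.inl i) + R i * M (Sum.inr i))
    (dk : Matrix (Fin a) (Fin b) ℝ) (hdk : dk = ∑ i, M i) :
    (∑ i, χ i) * dkᵀ = ∑ i, x i := by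
  subst hdk
  have key : ∀ (v : Matrix (Fin 1) (Fin a) ℝ) (i : Fin n ⊕ Fin n),
      (v * M i) * (∑ j, M j)ᵀ = v := by
    intro v i
    rw [transpose_sum, Matrix.mul_sum]
    have : ∀ j ∈ Finset.univ, (v * M i) * (M j)ᵀ =
        if j = i then v else 0 := by
      intro j _
      rw [Matrix.mul_assoc, hM]
      by_cases h : i = j
      · simp [h]
      · simp [h, Ne.symm h, Matrix.mul_zero]
    rw [Finset.sum_congr rfl this, Finset.sum_ite_eq' Finset.univ i]
    simp
  calc (∑ i, χ i) * (∑ j, M j)ᵀ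
      = ∑ i, (x i * M (Sum.inl i) + R i * M (Sum.inr i)) * (∑ j, M j)ᵀ := by
        rw [← Matrix.sum_mul]; congr 1; exact Finset.sum_congr rfl fun i _ => by rw [hχ i]
    _ = ∑ i, (x i + R i) := by
        refine Finset.sum_congr rfl fun i _ => ?_
        rw [Matrix.add_mul, key (x i), key (R i)]
    _ = ∑ i, x i := by rw [Finset.sum_add_distrib, hR, add_zero]
end

section
/- Let {Mᵢ}_{i=1}^{2n} be mutually orthogonal matrices, Rᵢ vectors with Σᵢ Rᵢ = 0, and 𝒱ᵢ arbitrary matrices of appropriate shape. Define vk = Σ_{i=1}^n 𝒱ᵢ M_{i+n} and χᵢ = xᵢ Mᵢ + Rᵢ M_{i+n}. Then for every i, vk · χᵢᵀ = 𝒱ᵢ · Rᵢᵀ, i.e. every honestly generated ciphertext passes the verification check. -/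
open Matrix BigOperators

/-- every honestly generated VOMCA ciphertext passes verification. -/
theorem vomca_verification (n a b c : ℕ)
    (M : (Fin n ⊕ Fin n) → Matrix (Fin a) (Fin b) ℝ)
    (hM : ∀ i j, M i * (M j)ᵀ = if i = j then 1 else 0)
    (x R : Fin n → Matrix (Fin 1) (Fin a) ℝ)
    (hR : ∑ i, R i = 0)
    (V : Fin n → Matrix (Fin c) (Fin a) ℝ)
    (vk : Matrix (Fin c) (Fin b) ℝ)
    (hvk : vk = ∑ i, V i * M (Sum.inr i))
    (χ : Fin n → Matrix (Fin 1) (Fin b) ℝ)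
    (hχ : ∀ i, χ i = x i * M (Sum.inl i) + R i * M (Sum.inr i)) :
    ∀ i, vk * (χ i)ᵀ = V i * (R i)ᵀ := by
  intro i
  rw [hvk, hχ, Matrix.sum_mul]
  have key : ∀ j : Fin n,
      V j * M (Sum.inr j) * (x i * M (Sum.inl i) + R i * M (Sum.inr i))ᵀ
        = if j = i then V i * (R i)ᵀ else 0 := by
    intro j
    rw [transpose_add, transpose_mul, transpose_mul, Matrix.mul_add]
    have h1 : V j * M (Sum.inr j) * ((M (Sum.inl i))ᵀ * (x i)ᵀ) = 0 := by
      rw [Matrix.mul_assoc, ← Matrix.mul_assoc (M (Sum.inr j)), hM]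
      simp
    have h2 := hM (Sum.inr j) (Sum.inr i)
    rw [h1, zero_add, ← Matrix.mul_assoc, Matrix.mul_assoc (V j), h2]
    by_cases h : j = i <;> simp [h]
  rw [Finset.sum_congr rfl fun j _ => key j]
  simp
end

section
/- Let {Mᵢ}_{i=1}^{2n} ⊂ ℝ^{a×b} be mutually orthogonal matrices and R′ᵢ ∈ ℝ^{a×a} invertible matrices. Define αᵢ = xᵢ · Mᵢᵀ R′ᵢ Mᵢ + M_{i+n}ᵀ R′ᵢ M_{i+n} for scalars xᵢ ∈ ℝ, β = Σ_{i=1}^{2n} Mᵢ, and τ₁ = Σ_{i=1}^n (Mᵢᵀ (R′ᵢ)⁻¹ Mᵢ + M_{i+n}ᵀ (R′ᵢ)⁻¹ (Rᵢ⁽⁰⁾ + ζᵢ M_{i+n})). Then β · (Σᵢ αᵢ) · τ₁ = Σ_{i=1}^n (xᵢ Mᵢ + Rᵢ⁽⁰⁾ + ζᵢ M_{i+n}). -/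
open Matrix BigOperators

/-- SRFC identity β · (Σᵢ αᵢ) · τ₁ = Σᵢ (xᵢ Mᵢ + Rᵢ⁽⁰⁾ + ζᵢ M_{i+n}). -/
theorem srfc_t1_identity (n a b : ℕ)
    (M : (Fin n ⊕ Fin n) → Matrix (Fin a) (Fin b) ℝ)
    (hM : ∀ i j, M i * (M j)ᵀ = if i = j then 1 else 0)
    (R' : Fin n → Matrix (Fin a) (Fin a) ℝ)
    (hR' : ∀ i, IsUnit (R' i))
    (x : Fin n → ℝ)
    (ζ : Fin n → Matrix (Fin a) (Fin a) ℝ)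
    (R0 : Fin n → Matrix (Fin a) (Fin b) ℝ)
    (α : Fin n → Matrix (Fin b) (Fin b) ℝ)
    (hα : ∀ i, α i = x i • ((M (Sum.inl i))ᵀ * R' i * M (Sum.inl i))
        + (M (Sum.inr i))ᵀ * R' i * M (Sum.inr i))
    (β : Matrix (Fin a) (Fin b) ℝ) (hβ : β = ∑ i, M i)
    (τ₁ : Matrix (Fin b) (Fin b) ℝ)
    (hτ₁ : τ₁ = ∑ i, ((M (Sum.inl i))ᵀ * (R' i)⁻¹ * M (Sum.inl i)
        + (M (Sum.inr i))ᵀ * (R' i)⁻¹ * (R0 i + ζ i * M (Sum.inr i)))) :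
    β * (∑ i, α i) * τ₁ = ∑ i, (x i • M (Sum.inl i) + R0 i + ζ i * M (Sum.inr i)) := by
  have hinv : ∀ i (Z : Matrix (Fin a) (Fin b) ℝ), R' i * ((R' i)⁻¹ * Z) = Z := by
    intro i Z
    rw [← Matrix.mul_assoc, Matrix.mul_nonsing_inv _ ((Matrix.isUnit_iff_isUnit_det _).mp (hR' i)),
      Matrix.one_mul]
  have hβM : ∀ j, β * (M j)ᵀ = 1 := by
    intro j
    rw [hβ, Matrix.sum_mul]
    simp [hM]
  have hcol : ∀ (X Y : Fin n ⊕ Fin n) (Z : Matrix (Fin a) (Fin b) ℝ),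
      M X * ((M Y)ᵀ * Z) = if X = Y then Z else 0 := by
    intro X Y Z
    rw [← Matrix.mul_assoc, hM]
    split <;> simp
  have hstep : β * (∑ i, α i)
      = ∑ i, (x i • (R' i * M (Sum.inl i)) + R' i * M (Sum.inr i)) := by
    rw [Matrix.mul_sum]
    refine Finset.sum_congr rfl fun i _ => ?_
    rw [hα, Matrix.mul_add, Matrix.mul_smul, Matrix.mul_assoc, Matrix.mul_assoc,
      ← Matrix.mul_assoc β, ← Matrix.mul_assoc β, hβM, hβM, Matrix.one_mul, Matrix.one_mul]
  rw [hstep, hτ₁, Matrix.sum_mul, Finset.sum_congr rfl fun i _ => Matrix.mul_sum _ _ _]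
  rw [Finset.sum_congr rfl (fun i _ => Finset.sum_eq_single i
    (fun j _ hji => ?_) (fun h => absurd (Finset.mem_univ i) h))]
  · refine Finset.sum_congr rfl fun i _ => ?_
    simp [Matrix.mul_add, Matrix.add_mul, Matrix.smul_mul, Matrix.mul_assoc, hcol, hinv]
    abel
  · have h1 : (Sum.inl i : Fin n ⊕ Fin n) ≠ Sum.inl j := by simp [Ne.symm hji]
    have h4 : (Sum.inr i : Fin n ⊕ Fin n) ≠ Sum.inr j := by simp [Ne.symm hji]
    simp only [Matrix.mul_add, Matrix.add_mul, Matrix.smul_mul, Matrix.mul_assoc, hcol]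
    simp [h1, h4]
end

section
/- Let {Mᵢ}_{i=1}^{n} and {M′ⱼ}_{j=1}^{m} each be families of mutually orthogonal matrices, and 𝒞 : [2n] → [2m] an index map. Given χᵢ = xᵢ Mᵢ + Rᵢ M_{i+n} and transformation key tkᵢ = Mᵢᵀ M′_{𝒞(i)} + M_{i+n}ᵀ (M′_{𝒞(i+n)} + Rᵢ⁻¹ R′ᵢ), one has χᵢ · tkᵢ = χ′ᵢ + R′ᵢ, where χ′ᵢ = xᵢ M′_{𝒞(i)} + Rᵢ M′_{𝒞(i+n)}. -/
open Matrix BigOperators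

/-- correctness of the Secure Key Transformation (SKT) mechanism:
χᵢ · tkᵢ = χ′ᵢ + R′ᵢ. -/
theorem skt_correctness (n m a b b' : ℕ)
    (M : (Fin n ⊕ Fin n) → Matrix (Fin a) (Fin b) ℝ)
    (hM : ∀ i j, M i * (M j)ᵀ = if i = j then 1 else 0)
    (M' : (Fin m ⊕ Fin m) → Matrix (Fin a) (Fin b') ℝ)
    (hM' : ∀ i j, M' i * (M' j)ᵀ = if i = j then 1 else 0)
    (C : (Fin n ⊕ Fin n) → (Fin m ⊕ Fin m))
    (x : Fin n → ℝ)
    (R : Fin n → Matrix (Fin a) (Fin a) ℝ) (hR : ∀ i, IsUnit (R i))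
    (R'' : Fin n → Matrix (Fin a) (Fin b') ℝ)
    (χ : Fin n → Matrix (Fin a) (Fin b) ℝ)
    (hχ : ∀ i, χ i = x i • M (Sum.inl i) + R i * M (Sum.inr i))
    (tk : Fin n → Matrix (Fin b) (Fin b') ℝ)
    (htk : ∀ i, tk i = (M (Sum.inl i))ᵀ * M' (C (Sum.inl i))
        + (M (Sum.inr i))ᵀ * (M' (C (Sum.inr i)) + (R i)⁻¹ * R'' i))
    (χ' : Fin n → Matrix (Fin a) (Fin b') ℝ)
    (hχ' : ∀ i, χ' i = x i • M' (C (Sum.inl i)) + R i * M' (C (Sum.inr i))) :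
    ∀ i, χ i * tk i = χ' i + R'' i := by
  intro i
  have h11 := hM (Sum.inl i) (Sum.inl i)
  have h12 := hM (Sum.inl i) (Sum.inr i)
  have h21 := hM (Sum.inr i) (Sum.inl i)
  have h22 := hM (Sum.inr i) (Sum.inr i)
  simp only [if_pos rfl, if_neg (by simp : (Sum.inl i : Fin n ⊕ Fin n) ≠ Sum.inr i),
    if_neg (by simp : (Sum.inr i : Fin n ⊕ Fin n) ≠ Sum.inl i), if_true] at h11 h12 h21 h22
  have hRinv : R i * (R i)⁻¹ = 1 :=
    Matrix.mul_nonsing_inv (R i) ((Matrix.isUnit_iff_isUnit_det (R i)).mp (hR i))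
  rw [hχ, htk, hχ']
  simp only [Matrix.add_mul, Matrix.mul_add, Matrix.smul_mul, ← Matrix.mul_assoc]
  simp only [Matrix.mul_assoc (R i) (M (Sum.inr i)) (M (Sum.inr i))ᵀ, Matrix.mul_assoc (R i) (M (Sum.inr i)) (M (Sum.inl i))ᵀ, h11, h12, h21, h22,
    Matrix.one_mul, Matrix.mul_one, Matrix.zero_mul, Matrix.mul_zero, smul_zero,
    add_zero, zero_add, hRinv, Matrix.mul_smul]
  abel
end

section
/- Let {M′ⱼ}_{j=1}^{2m} be mutually orthogonal matrices, 𝒞 : [n] → [m] any map, χ′ᵢ = xᵢ M′_{𝒞(i)} + Rᵢ M′_{𝒞(i)+m} with Σᵢ Rᵢ = 0, and dk′ = Σ_{j=1}^{2m} M′ⱼ. Then (Σ_{i=1}^n χ′ᵢ)·(dk′)ᵀ = Σ_{i=1}^n xᵢ. -/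
open Matrix BigOperators

/-- aggregation and decoding succeed after key transformation,
even when several clients share the same transformed key index 𝒞(i). -/
theorem skt_aggregate_decode (n m a b : ℕ)
    (M' : (Fin m ⊕ Fin m) → Matrix (Fin a) (Fin b) ℝ)
    (hM' : ∀ i j, M' i * (M' j)ᵀ = if i = j then 1 else 0)
    (C : Fin n → Fin m)
    (x R : Fin n → Matrix (Fin 1) (Fin a) ℝ) (hR : ∑ i, R i = 0)
    (χ' : Fin n → Matrix (Fin 1) (Fin b) ℝ)
    (hχ' : ∀ i, χ' i = x i * M' (Sum.inl (C i)) + R i * M' (Sum.inr (C i)))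
    (dk' : Matrix (Fin a) (Fin b) ℝ) (hdk' : dk' = ∑ j, M' j) :
    (∑ i, χ' i) * dk'ᵀ = ∑ i, x i := by
  have key : ∀ k : Fin m ⊕ Fin m, M' k * dk'ᵀ = 1 := by
    intro k
    rw [hdk', Matrix.transpose_sum, Matrix.mul_sum]
    rw [Finset.sum_eq_single k]
    · simp [hM']
    · intro j _ hj; rw [hM']; simp [Ne.symm hj]
    · simp
  have hterm : ∀ i, χ' i * dk'ᵀ = x i + R i := by
    intro i
    rw [hχ', Matrix.add_mul, Matrix.mul_assoc, Matrix.mul_assoc, key, key, Matrix.mul_one, Matrix.mul_one]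
  rw [Matrix.sum_mul]
  simp only [hterm]
  rw [Finset.sum_add_distrib, hR, add_zero]
end
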